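/- arXiv:1804.09261 — 2 statements merged into one kernel-verified Lean document; each statement's English description precedes it below -/
import Mathlib

section
/- The function Ψ(x) = (1−|x|²)/(1+|x|²) on ℝ⁶ satisfies (−Δ)³Ψ = 720·Ψ·e^{6η}, where η(x) = log(2/(1+|x|²)). -/
open Real

/-- The Laplacian on `ℝ⁶`. -/
noncomputable def lap6 (f : EuclideanSpace ℝ (Fin 6) → ℝ) (x : EuclideanSpace ℝ (Fin 6)) : ℝ :=
  ∑ i : Fin 6, iteratedDeriv 2 (fun t : ℝ => f (x + t • EuclideanSpace.single i (1:ℝ))) 0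

section Aux

lemma aux_normsq (x : EuclideanSpace ℝ (Fin 6)) : ‖x‖^2 = ∑ i, (x i)^2 := by
  have h : 0 ≤ ∑ i, (x i)^2 := by positivity
  rw [EuclideanSpace.norm_eq]
  simp only [Real.norm_eq_abs, sq_abs]
  rw [Real.sq_sqrt h]

lemma aux_line_normsq (x : EuclideanSpace ℝ (Fin 6)) (i : Fin 6) (t : ℝ) :
    ‖x + t • EuclideanSpace.single i (1:ℝ)‖^2 = ‖x‖^2 + 2*(x i)*t + t^2 := by
  rw [@norm_add_sq_real]
  rw [real_inner_smul_right, EuclideanSpace.inner_single_right]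
  simp [norm_smul, EuclideanSpace.norm_single]
  ring

lemma aux_second_deriv (g g' g'' : ℝ → ℝ) (a b : ℝ) (hab : b^2 ≤ a)
    (hg : ∀ s, -1 < s → HasDerivAt g (g' s) s)
    (hg' : ∀ s, -1 < s → HasDerivAt g' (g'' s) s) :
    iteratedDeriv 2 (fun t => g (a + 2*b*t + t^2)) 0 = g'' a * (2*b)^2 + g' a * 2 := by
  have hq : ∀ t : ℝ, -1 < a + 2*b*t + t^2 := by
    intro t
    nlinarith [sq_nonneg (t+b)]
  have hqd : ∀ t : ℝ, HasDerivAt (fun t => a + 2*b*t + t^2) (2*b + 2*t) t := by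
    intro t
    have h1 : HasDerivAt (fun t : ℝ => a + 2*b*t + t^2) (0 + 2*b*1 + 2*t) t := by
      exact ((hasDerivAt_const t a).add ((hasDerivAt_id t).const_mul (2*b))).add
        (by simpa using (hasDerivAt_pow 2 t))
    simpa using h1
  have hd1 : ∀ t : ℝ, HasDerivAt (fun t => g (a + 2*b*t + t^2))
      (g' (a + 2*b*t + t^2) * (2*b + 2*t)) t := by
    intro t
    exact (hg _ (hq t)).comp t (hqd t)
  have hderiv1 : deriv (fun t => g (a + 2*b*t + t^2))
      = fun t => g' (a + 2*b*t + t^2) * (2*b + 2*t) := by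
    funext t; exact (hd1 t).deriv
  rw [iteratedDeriv_succ, iteratedDeriv_one, hderiv1]
  have hd2 : HasDerivAt (fun t => g' (a + 2*b*t + t^2) * (2*b + 2*t))
      (g'' (a + 2*b*0 + 0^2) * (2*b + 2*0) * (2*b + 2*0) + g' (a + 2*b*0 + 0^2) * 2) 0 := by
    refine HasDerivAt.mul ?_ ?_
    · exact (hg' _ (hq 0)).comp 0 (hqd 0)
    · simpa using ((hasDerivAt_id (0:ℝ)).const_mul 2).const_add (2*b)
  rw [hd2.deriv]; ring_nf

lemma aux_lap6_radial (g g' g'' : ℝ → ℝ)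
    (hg : ∀ s, -1 < s → HasDerivAt g (g' s) s)
    (hg' : ∀ s, -1 < s → HasDerivAt g' (g'' s) s)
    (x : EuclideanSpace ℝ (Fin 6)) :
    lap6 (fun y => g (‖y‖^2)) x = 12 * g' (‖x‖^2) + 4 * ‖x‖^2 * g'' (‖x‖^2) := by
  have hsum : ‖x‖^2 = ∑ i, (x i)^2 := aux_normsq x
  have hterm : ∀ i : Fin 6,
      iteratedDeriv 2 (fun t : ℝ => g (‖x + t • EuclideanSpace.single i (1:ℝ)‖^2)) 0
      = g'' (‖x‖^2) * (2*(x i))^2 + g' (‖x‖^2) * 2 := by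
    intro i
    have heq : (fun t : ℝ => g (‖x + t • EuclideanSpace.single i (1:ℝ)‖^2))
        = fun t => g (‖x‖^2 + 2*(x i)*t + t^2) := by
      funext t; rw [aux_line_normsq]
    rw [heq]
    refine aux_second_deriv g g' g'' _ _ ?_ hg hg'
    rw [hsum]
    exact Finset.single_le_sum (f := fun i => (x i)^2) (fun j _ => sq_nonneg _)
      (Finset.mem_univ i)
  unfold lap6
  simp only [hterm]
  rw [Finset.sum_add_distrib, ← Finset.mul_sum, Finset.sum_const]
  have h4 : ∑ i : Fin 6, (2*(x i))^2 = 4 * ‖x‖^2 := by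
    rw [hsum, Finset.mul_sum]
    exact Finset.sum_congr rfl fun i _ => by ring
  rw [h4]
  simp only [Finset.card_univ, Fintype.card_fin, nsmul_eq_mul]
  push_cast
  ring

noncomputable def G0 (s : ℝ) : ℝ := (1-s)/(1+s)
noncomputable def G0' (s : ℝ) : ℝ := -2/(1+s)^2
noncomputable def G0'' (s : ℝ) : ℝ := 4/(1+s)^3
noncomputable def G1 (s : ℝ) : ℝ := (-24-8*s)/(1+s)^3
noncomputable def G1' (s : ℝ) : ℝ := 16*(4+s)/(1+s)^4
noncomputable def G1'' (s : ℝ) : ℝ := -48*(5+s)/(1+s)^5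
noncomputable def G2 (s : ℝ) : ℝ := 768/(1+s)^5
noncomputable def G2' (s : ℝ) : ℝ := -3840/(1+s)^6
noncomputable def G2'' (s : ℝ) : ℝ := 23040/(1+s)^7
noncomputable def G3 (s : ℝ) : ℝ := 46080*(s-1)/(1+s)^7

lemma aux_dpow (n : ℕ) (s : ℝ) :
    HasDerivAt (fun s : ℝ => (1+s)^n) (n * (1+s)^(n-1)) s := by
  have h := ((hasDerivAt_id s).const_add 1).pow n
  simpa [Pi.pow_def] using h

lemma aux_hasDerivAt_of_eq {f g : ℝ → ℝ} {d d' s : ℝ} (h : HasDerivAt f d s)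
    (hfg : ∀ y, g y = f y) (hd : d = d') : HasDerivAt g d' s := by
  subst hd
  exact h.congr_of_eventuallyEq (Filter.Eventually.of_forall hfg)

lemma hG0 : ∀ s : ℝ, -1 < s → HasDerivAt G0 (G0' s) s := by
  intro s hs
  have hne' : (1:ℝ) + s ≠ 0 := by linarith
  refine aux_hasDerivAt_of_eq
    (((hasDerivAt_id s).const_sub 1).div ((hasDerivAt_id s).const_add 1) hne') ?_ ?_
  · intro y; unfold G0; simp only [id_eq, Pi.div_apply]
  · unfold G0'; simp only [id_eq]; field_simp; ring

lemma hG0' : ∀ s : ℝ, -1 < s → HasDerivAt G0' (G0'' s) s := by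
  intro s hs
  have hne' : (1:ℝ) + s ≠ 0 := by linarith
  refine aux_hasDerivAt_of_eq
    ((hasDerivAt_const s (-2:ℝ)).div (aux_dpow 2 s) (pow_ne_zero _ hne')) ?_ ?_
  · intro y; rfl
  · unfold G0''; push_cast; field_simp; ring

lemma hG1 : ∀ s : ℝ, -1 < s → HasDerivAt G1 (G1' s) s := by
  intro s hs
  have hne' : (1:ℝ) + s ≠ 0 := by linarith
  refine aux_hasDerivAt_of_eq
    ((((hasDerivAt_id s).const_mul (-8:ℝ)).const_add (-24)).div (aux_dpow 3 s)
      (pow_ne_zero _ hne')) ?_ ?_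
  · intro y; unfold G1; simp only [id_eq, Pi.div_apply]; ring
  · unfold G1'; simp only [id_eq]; push_cast; field_simp; ring

lemma hG1' : ∀ s : ℝ, -1 < s → HasDerivAt G1' (G1'' s) s := by
  intro s hs
  have hne' : (1:ℝ) + s ≠ 0 := by linarith
  refine aux_hasDerivAt_of_eq
    ((((hasDerivAt_id s).const_add 4).const_mul (16:ℝ)).div (aux_dpow 4 s)
      (pow_ne_zero _ hne')) ?_ ?_
  · intro y; unfold G1'; simp only [id_eq, Pi.div_apply]
  · unfold G1''; simp only [id_eq]; push_cast; field_simp; ring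

lemma hG2 : ∀ s : ℝ, -1 < s → HasDerivAt G2 (G2' s) s := by
  intro s hs
  have hne' : (1:ℝ) + s ≠ 0 := by linarith
  refine aux_hasDerivAt_of_eq
    ((hasDerivAt_const s (768:ℝ)).div (aux_dpow 5 s) (pow_ne_zero _ hne')) ?_ ?_
  · intro y; rfl
  · unfold G2'; push_cast; field_simp; ring

lemma hG2' : ∀ s : ℝ, -1 < s → HasDerivAt G2' (G2'' s) s := by
  intro s hs
  have hne' : (1:ℝ) + s ≠ 0 := by linarith
  refine aux_hasDerivAt_of_eq
    ((hasDerivAt_const s (-3840:ℝ)).div (aux_dpow 6 s) (pow_ne_zero _ hne')) ?_ ?_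
  · intro y; rfl
  · unfold G2''; push_cast; field_simp; ring

lemma aux_rad1 (s : ℝ) (hs : -1 < s) : 12 * G0' s + 4 * s * G0'' s = G1 s := by
  have hne : (1:ℝ) + s ≠ 0 := by linarith
  unfold G0' G0'' G1
  field_simp
  ring

lemma aux_rad2 (s : ℝ) (hs : -1 < s) : 12 * G1' s + 4 * s * G1'' s = G2 s := by
  have hne : (1:ℝ) + s ≠ 0 := by linarith
  unfold G1' G1'' G2
  field_simp
  ring

lemma aux_rad3 (s : ℝ) (hs : -1 < s) : 12 * G2' s + 4 * s * G2'' s = G3 s := by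
  have hne : (1:ℝ) + s ≠ 0 := by linarith
  unfold G2' G2'' G3
  field_simp
  ring

end Aux

/-- The function `Ψ(x) = (1−|x|²)/(1+|x|²)` on `ℝ⁶` satisfies the linearized
Liouville equation `(−Δ)³Ψ = 720·Ψ·e^{6η}`, where `η(x) = log(2/(1+|x|²))`. -/
theorem stmt8 (Ψ η : EuclideanSpace ℝ (Fin 6) → ℝ)
    (hΨ : ∀ x, Ψ x = (1 - ‖x‖^2) / (1 + ‖x‖^2))
    (hη : ∀ x, η x = Real.log (2 / (1 + ‖x‖^2))) :
    ∀ x, - lap6 (lap6 (lap6 Ψ)) x = 720 * Ψ x * Real.exp (6 * η x) := by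
  have hpos : ∀ x : EuclideanSpace ℝ (Fin 6), (-1:ℝ) < ‖x‖^2 := by
    intro x; have := sq_nonneg ‖x‖; linarith
  have hΨfun : Ψ = fun y => G0 (‖y‖^2) := by
    funext y; rw [hΨ]; rfl
  have h1 : lap6 Ψ = fun y => G1 (‖y‖^2) := by
    funext y
    rw [hΨfun, aux_lap6_radial G0 G0' G0'' hG0 hG0', aux_rad1 _ (hpos y)]
  have h2 : lap6 (lap6 Ψ) = fun y => G2 (‖y‖^2) := by
    funext y
    rw [h1, aux_lap6_radial G1 G1' G1'' hG1 hG1', aux_rad2 _ (hpos y)]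
  have h3 : lap6 (lap6 (lap6 Ψ)) = fun y => G3 (‖y‖^2) := by
    funext y
    rw [h2, aux_lap6_radial G2 G2' G2'' hG2 hG2', aux_rad3 _ (hpos y)]
  intro x
  rw [h3, hΨ, hη]
  set s := ‖x‖^2 with hs
  have hs0 : 0 ≤ s := sq_nonneg _
  have hne : (1:ℝ) + s ≠ 0 := by positivity
  have hu : (0:ℝ) < 2 / (1 + s) := by positivity
  have hexp : Real.exp (6 * Real.log (2 / (1 + s))) = (2 / (1 + s))^6 := by
    rw [show (6:ℝ) = ((6:ℕ):ℝ) by norm_num, ← Real.log_pow,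
      Real.exp_log (by positivity)]
  rw [hexp]
  unfold G3
  field_simp
  ring
end

section
/- For the radial functions ψ(r) = ar² + br⁴ − α·log r + o(log r) and Ψ(r) = −1 + 2/r² + o(r⁻²) on ℝ⁶ (with all derivative expansions as specified), the boundary bilinear form ∫_{∂B_r}(ψ(Δ²Ψ)' − ψ'Δ²Ψ + Δψ(ΔΨ)' − (Δψ)'ΔΨ + Δ²ψ·Ψ' − (Δ²ψ)'·Ψ)dσ tends to a limit as r → ∞ which vanishes if and only if α = 6a + 48b. -/
open Real Filter Asymptotics

set_option maxHeartbeats 2000000 in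
/-- The balancing identity for the boundary bilinear form: given radial profiles
`ψ, Ψ : ℝ → ℝ` on `ℝ⁶` with the asymptotic expansions
`ψ(r) = ar² + br⁴ − α log r + o(log r)`, `Ψ(r) = −1 + 2/r² + o(r⁻²)` (and the
corresponding expansions for the radial derivatives and the iterated radial
Laplacians, as specified), the boundary form
`∫_{∂B_r}(ψ(Δ²Ψ)' − ψ'Δ²Ψ + Δψ(ΔΨ)' − (Δψ)'ΔΨ + Δ²ψΨ' − (Δ²ψ)'Ψ)dσ = ω₅r⁵·(…)`
with `ω₅ = π³` tends to a limit as `r → ∞`, and this limit vanishes if and only if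
`α = 6a + 48b`. -/
theorem stmt15 (a b α : ℝ)
    (ψ ψ' Lψ Lψ' LLψ LLψ' Ψ Ψ' LΨ LΨ' LLΨ LLΨ' : ℝ → ℝ)
    (hψ : (fun r => ψ r - (a*r^2 + b*r^4 - α * Real.log r)) =o[atTop] Real.log)
    (hψ' : (fun r => ψ' r - (2*a*r + 4*b*r^3 - α/r)) =o[atTop] (fun r => 1/r))
    (hLψ : (fun r => Lψ r - (12*a + 32*b*r^2 - 4*α/r^2)) =o[atTop] (fun r => 1/r^2))
    (hLψ' : (fun r => Lψ' r - (64*b*r + 8*α/r^3)) =o[atTop] (fun r => 1/r^3))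
    (hLLψ : (fun r => LLψ r - (384*b + 16*α/r^4)) =o[atTop] (fun r => 1/r^4))
    (hLLψ' : (fun r => LLψ' r - (-64*α/r^5)) =o[atTop] (fun r => 1/r^5))
    (hΨ : (fun r => Ψ r - (-1 + 2/r^2)) =o[atTop] (fun r => 1/r^2))
    (hΨ' : (fun r => Ψ' r - (-4/r^3 + 8/r^5)) =o[atTop] (fun r => 1/r^5))
    (hLΨ : (fun r => LΨ r - (-8/r^4 + 24/r^8)) =o[atTop] (fun r => 1/r^8))
    (hLΨ' : (fun r => LΨ' r - (32/r^5 - 192/r^9)) =o[atTop] (fun r => 1/r^9))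
    (hLLΨ : (fun r => LLΨ r - 768/r^10) =o[atTop] (fun r => 1/r^10))
    (hLLΨ' : (fun r => LLΨ' r - (-7680/r^11)) =o[atTop] (fun r => 1/r^11)) :
    ∃ L : ℝ,
      Tendsto (fun r => π^3 * r^5 *
          (ψ r * LLΨ' r - ψ' r * LLΨ r + Lψ r * LΨ' r - Lψ' r * LΨ r
            + LLψ r * Ψ' r - LLψ' r * Ψ r)) atTop (nhds L)
        ∧ (L = 0 ↔ α = 6*a + 48*b) := by
  refine ⟨π^3 * (384*a + 3072*b - 64*α), ?_, ?_⟩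
  · -- error quotients tend to 0
    have hv1 : Tendsto (fun r => (ψ r - (a*r^2 + b*r^4 - α * Real.log r)) / Real.log r) atTop (nhds 0) :=
      hψ.tendsto_div_nhds_zero
    have hv2 : Tendsto (fun r => (ψ' r - (2*a*r + 4*b*r^3 - α/r)) / (1/r)) atTop (nhds 0) :=
      hψ'.tendsto_div_nhds_zero
    have hv3 : Tendsto (fun r => (Lψ r - (12*a + 32*b*r^2 - 4*α/r^2)) / (1/r^2)) atTop (nhds 0) :=
      hLψ.tendsto_div_nhds_zero
    have hv4 : Tendsto (fun r => (Lψ' r - (64*b*r + 8*α/r^3)) / (1/r^3)) atTop (nhds 0) :=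
      hLψ'.tendsto_div_nhds_zero
    have hv5 : Tendsto (fun r => (LLψ r - (384*b + 16*α/r^4)) / (1/r^4)) atTop (nhds 0) :=
      hLLψ.tendsto_div_nhds_zero
    have hv6 : Tendsto (fun r => (LLψ' r - (-64*α/r^5)) / (1/r^5)) atTop (nhds 0) :=
      hLLψ'.tendsto_div_nhds_zero
    have hv7 : Tendsto (fun r => (Ψ r - (-1 + 2/r^2)) / (1/r^2)) atTop (nhds 0) :=
      hΨ.tendsto_div_nhds_zero
    have hv8 : Tendsto (fun r => (Ψ' r - (-4/r^3 + 8/r^5)) / (1/r^5)) atTop (nhds 0) :=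
      hΨ'.tendsto_div_nhds_zero
    have hv9 : Tendsto (fun r => (LΨ r - (-8/r^4 + 24/r^8)) / (1/r^8)) atTop (nhds 0) :=
      hLΨ.tendsto_div_nhds_zero
    have hv10 : Tendsto (fun r => (LΨ' r - (32/r^5 - 192/r^9)) / (1/r^9)) atTop (nhds 0) :=
      hLΨ'.tendsto_div_nhds_zero
    have hv11 : Tendsto (fun r => (LLΨ r - 768/r^10) / (1/r^10)) atTop (nhds 0) :=
      hLLΨ.tendsto_div_nhds_zero
    have hv12 : Tendsto (fun r => (LLΨ' r - (-7680/r^11)) / (1/r^11)) atTop (nhds 0) :=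
      hLLΨ'.tendsto_div_nhds_zero
    have hinv : ∀ n : ℕ, n ≠ 0 → Tendsto (fun r : ℝ => 1/r^n) atTop (nhds 0) := by
      intro n hn
      exact (tendsto_pow_atTop hn).inv_tendsto_atTop.congr fun r => by simp [one_div]
    have hinv2 := hinv 2 (by norm_num)
    have hinv4 := hinv 4 (by norm_num)
    have hinv6 := hinv 6 (by norm_num)
    have hlog6 : Tendsto (fun r : ℝ => Real.log r / r^6) atTop (nhds 0) := by
      have h1 : Tendsto (fun r : ℝ => (Real.log r / r) * (1/r^5)) atTop (nhds 0) := by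
        simpa using (Real.isLittleO_log_id_atTop.tendsto_div_nhds_zero).mul (hinv 5 (by norm_num))
      refine h1.congr fun r => ?_
      rw [mul_one_div, div_div, ← pow_succ']
    have hS2 : Tendsto (fun r => b * ((LLΨ' r - (-7680/r^11)) / (1/r^11)) + ((-4*b) * ((LLΨ r - 768/r^10) / (1/r^10)) + ((32*b) * ((LΨ' r - (32/r^5 - 192/r^9)) / (1/r^9)) + ((-64*b) * ((LΨ r - (-8/r^4 + 24/r^8)) / (1/r^8)) + ((32:ℝ) * ((Lψ r - (12*a + 32*b*r^2 - 4*α/r^2)) / (1/r^2)) + ((8:ℝ) * ((Lψ' r - (64*b*r + 8*α/r^3)) / (1/r^3)) + ((-4:ℝ) * ((LLψ r - (384*b + 16*α/r^4)) / (1/r^4)) + ((64*α) * ((Ψ r - (-1 + 2/r^2)) / (1/r^2)) + ((-2:ℝ) * ((LLψ' r - (-64*α/r^5)) / (1/r^5)) + (-(((LLψ' r - (-64*α/r^5)) / (1/r^5)) * ((Ψ r - (-1 + 2/r^2)) / (1/r^2))))))))))))) atTop (nhds 0) := by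
      simpa using (hv12.const_mul b).add ((hv11.const_mul (-4*b)).add ((hv10.const_mul (32*b)).add ((hv9.const_mul (-64*b)).add ((hv3.const_mul (32:ℝ)).add ((hv4.const_mul (8:ℝ)).add ((hv5.const_mul (-4:ℝ)).add ((hv7.const_mul (64*α)).add ((hv6.const_mul (-2:ℝ)).add ((hv6.mul hv7).neg)))))))))
    have hS4 : Tendsto (fun r => a * ((LLΨ' r - (-7680/r^11)) / (1/r^11)) + ((-2*a) * ((LLΨ r - 768/r^10) / (1/r^10)) + ((12*a) * ((LΨ' r - (32/r^5 - 192/r^9)) / (1/r^9)) + ((16*α) * ((Ψ' r - (-4/r^3 + 8/r^5)) / (1/r^5)) + ((8:ℝ) * ((LLψ r - (384*b + 16*α/r^4)) / (1/r^4)) + (((LLψ r - (384*b + 16*α/r^4)) / (1/r^4)) * ((Ψ' r - (-4/r^3 + 8/r^5)) / (1/r^5)))))))) atTop (nhds 0) := by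
      simpa using (hv12.const_mul a).add ((hv11.const_mul (-2*a)).add ((hv10.const_mul (12*a)).add ((hv8.const_mul (16*α)).add ((hv5.const_mul (8:ℝ)).add (hv5.mul hv8)))))
    have hSL : Tendsto (fun r => (-α) * ((LLΨ' r - (-7680/r^11)) / (1/r^11)) + ((-7680:ℝ) * ((ψ r - (a*r^2 + b*r^4 - α * Real.log r)) / Real.log r) + (((ψ r - (a*r^2 + b*r^4 - α * Real.log r)) / Real.log r) * ((LLΨ' r - (-7680/r^11)) / (1/r^11))))) atTop (nhds 0) := by
      simpa using (hv12.const_mul (-α)).add ((hv1.const_mul (-7680:ℝ)).add (hv1.mul hv12))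
    have hS6 : Tendsto (fun r => α * ((LLΨ r - 768/r^10) / (1/r^10)) + ((-768:ℝ) * ((ψ' r - (2*a*r + 4*b*r^3 - α/r)) / (1/r)) + (-(((ψ' r - (2*a*r + 4*b*r^3 - α/r)) / (1/r)) * ((LLΨ r - 768/r^10) / (1/r^10))) + ((-4*α) * ((LΨ' r - (32/r^5 - 192/r^9)) / (1/r^9)) + ((-192:ℝ) * ((Lψ r - (12*a + 32*b*r^2 - 4*α/r^2)) / (1/r^2)) + (((Lψ r - (12*a + 32*b*r^2 - 4*α/r^2)) / (1/r^2)) * ((LΨ' r - (32/r^5 - 192/r^9)) / (1/r^9)) + ((-8*α) * ((LΨ r - (-8/r^4 + 24/r^8)) / (1/r^8)) + ((-24:ℝ) * ((Lψ' r - (64*b*r + 8*α/r^3)) / (1/r^3)) + (-(((Lψ' r - (64*b*r + 8*α/r^3)) / (1/r^3)) * ((LΨ r - (-8/r^4 + 24/r^8)) / (1/r^8)))))))))))) atTop (nhds 0) := by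
      simpa using (hv11.const_mul α).add ((hv2.const_mul (-768:ℝ)).add (((hv2.mul hv11).neg).add ((hv10.const_mul (-4*α)).add ((hv3.const_mul (-192:ℝ)).add ((hv3.mul hv10).add ((hv9.const_mul (-8*α)).add ((hv4.const_mul (-24:ℝ)).add ((hv4.mul hv9).neg))))))))
    have hZ0 : Tendsto (fun r => (384*b) * ((Ψ' r - (-4/r^3 + 8/r^5)) / (1/r^5)) + ((LLψ' r - (-64*α/r^5)) / (1/r^5))) atTop (nhds 0) := by
      simpa using (hv8.const_mul (384*b)).add hv6
    have hP2 : Tendsto (fun r => (-18432*b + (b * ((LLΨ' r - (-7680/r^11)) / (1/r^11)) + ((-4*b) * ((LLΨ r - 768/r^10) / (1/r^10)) + ((32*b) * ((LΨ' r - (32/r^5 - 192/r^9)) / (1/r^9)) + ((-64*b) * ((LΨ r - (-8/r^4 + 24/r^8)) / (1/r^8)) + ((32:ℝ) * ((Lψ r - (12*a + 32*b*r^2 - 4*α/r^2)) / (1/r^2)) + ((8:ℝ) * ((Lψ' r - (64*b*r + 8*α/r^3)) / (1/r^3)) + ((-4:ℝ) * ((LLψ r - (384*b + 16*α/r^4))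 / (1/r^4)) + ((64*α) * ((Ψ r - (-1 + 2/r^2)) / (1/r^2)) + ((-2:ℝ) * ((LLψ' r - (-64*α/r^5)) / (1/r^5)) + (-(((LLψ' r - (-64*α/r^5)) / (1/r^5)) * ((Ψ r - (-1 + 2/r^2)) / (1/r^2)))))))))))))) * (1/r^2)) atTop (nhds 0) := by
      simpa using (tendsto_const_nhds.add hS2).mul hinv2
    have hP4 : Tendsto (fun r => (-11520*a + 128*α + (a * ((LLΨ' r - (-7680/r^11)) / (1/r^11)) + ((-2*a) * ((LLΨ r - 768/r^10) / (1/r^10)) + ((12*a) * ((LΨ' r - (32/r^5 - 192/r^9)) / (1/r^9)) + ((16*α) * ((Ψ' r - (-4/r^3 + 8/r^5)) / (1/r^5)) + ((8:ℝ) * ((LLψ r - (384*b + 16*α/r^4)) / (1/r^4)) + (((LLψ r - (384*b + 16*α/r^4)) / (1/r^4)) * ((Ψ' r - (-4/r^3 + 8/r^5)) / (1/r^5))))))))) * (1/r^4)) atTop (nhds 0) := by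
      simpa using (tendsto_const_nhds.add hS4).mul hinv4
    have hPL : Tendsto (fun r => (7680*α + ((-α) * ((LLΨ' r - (-7680/r^11)) / (1/r^11)) + ((-7680:ℝ) * ((ψ r - (a*r^2 + b*r^4 - α * Real.log r)) / Real.log r) + (((ψ r - (a*r^2 + b*r^4 - α * Real.log r)) / Real.log r) * ((LLΨ' r - (-7680/r^11)) / (1/r^11)))))) * (Real.log r / r^6)) atTop (nhds 0) := by
      simpa using (tendsto_const_nhds.add hSL).mul hlog6
    have hP6 : Tendsto (fun r => (1344*α + (α * ((LLΨ r - 768/r^10) / (1/r^10)) + ((-768:ℝ) * ((ψ' r - (2*a*r + 4*b*r^3 - α/r)) / (1/r)) + (-(((ψ' r - (2*a*r + 4*b*r^3 - α/r)) / (1/r)) * ((LLΨ r - 768/r^10) / (1/r^10))) + ((-4*α) * ((LΨ' r - (32/r^5 - 192/r^9)) / (1/r^9)) + ((-192:ℝ) * ((Lψ r - (12*a + 32*b*r^2 - 4*α/r^2)) / (1/r^2)) + (((Lψ r - (12*a + 32*b*r^2 - 4*α/r^2)) / (1/r^2)) * ((LΨ' r - (32/r^5 - 192/r^9)) / (1/r^9))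 + ((-8*α) * ((LΨ r - (-8/r^4 + 24/r^8)) / (1/r^8)) + ((-24:ℝ) * ((Lψ' r - (64*b*r + 8*α/r^3)) / (1/r^3)) + (-(((Lψ' r - (64*b*r + 8*α/r^3)) / (1/r^3)) * ((LΨ r - (-8/r^4 + 24/r^8)) / (1/r^8))))))))))))) * (1/r^6)) atTop (nhds 0) := by
      simpa using (tendsto_const_nhds.add hS6).mul hinv6
    have hZ := hZ0.add (hP2.add (hP4.add (hPL.add hP6)))
    simp only [add_zero] at hZ
    have hinner := (tendsto_const_nhds (x := 384*a + 3072*b - 64*α) (f := atTop)).add hZ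
    simp only [add_zero] at hinner
    have hfinal := hinner.const_mul (π^3)
    refine hfinal.congr' ?_
    filter_upwards [eventually_gt_atTop (1:ℝ)] with r hr
    have hr0 : r ≠ 0 := by positivity
    have hlogne : Real.log r ≠ 0 := ne_of_gt (Real.log_pos hr)
    field_simp
    ring
  · have hπ : (π:ℝ)^3 ≠ 0 := by positivity
    rw [mul_eq_zero]
    simp only [hπ, false_or]
    constructor
    · intro h; linarith
    · intro h; linarith
end
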